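/- For the two-source M/G/1/1 queue under the non-preemptive policy, the derivative at s = 0 of M̃_{δ_1}(s) = λ_1 M_S(s)(s + λ(M_S(s) − 1)) / (s(λ/μ+1)(λ − s − λ_2 M_S(s))) (extended continuously at s = 0) equals (λ+μ)/(λ_1 μ) + λμ E[S²]/(2(λ+μ)); i.e., the average AoI is Δ̃_1 = (λ+μ)/(λ_1 μ) + λμ E[S²]/(2(λ+μ)). -/

import Mathlib

open Filter

/-- For the two-source M/G/1/1 queue under the non-preemptive policy, the derivative of
`M̃_{δ_1}(s) = λ_1 M_S(s)(s + λ(M_S(s) - 1)) / (s(λ/μ+1)(λ - s - λ_2 M_S(s)))`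
(with `λ = λ_1 + λ_2`) tends, as `s → 0`, to
`(λ+μ)/(λ_1 μ) + λ μ E[S²]/(2(λ+μ))`: the average AoI is
`Δ̃_1 = (λ+μ)/(λ_1 μ) + λ μ E[S²]/(2(λ+μ))`, where `M_S(0) = 1`, `M'_S(0) = 1/μ`,
and `M''_S(0) = E[S²]`. -/
theorem avg_aoi_non_preemptive (l1 l2 mu ES2 : ℝ) (MS : ℝ → ℝ)
    (hl1 : 0 < l1) (hl2 : 0 < l2) (hmu : 0 < mu)
    (hdiff : ∀ᶠ x in nhds (0 : ℝ), DifferentiableAt ℝ MS x)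
    (hdiff2 : DifferentiableAt ℝ (deriv MS) 0)
    (hMS0 : MS 0 = 1) (hMS0' : deriv MS 0 = 1 / mu) (hMS0'' : deriv (deriv MS) 0 = ES2) :
    Tendsto
      (deriv (fun s =>
        l1 * MS s * (s + (l1 + l2) * (MS s - 1)) /
          (s * ((l1 + l2) / mu + 1) * ((l1 + l2) - s - l2 * MS s))))
      (nhdsWithin 0 {0}ᶜ)
      (nhds ((l1 + l2 + mu) / (l1 * mu) + (l1 + l2) * mu * ES2 / (2 * (l1 + l2 + mu)))) := by
  have hmu' : mu ≠ 0 := hmu.ne'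
  have hl1' : l1 ≠ 0 := hl1.ne'
  set lam := l1 + l2 with hlamdef
  set a := lam / mu + 1 with hadef
  have hlam : 0 < lam := by positivity
  have ha : 0 < a := by positivity
  have ha' : a ≠ 0 := ha.ne'
  set u := deriv MS with hu
  have hMSd0 : DifferentiableAt ℝ MS 0 := hdiff.self_of_nhds
  have hMScont : ContinuousAt MS 0 := hMSd0.continuousAt
  have hucont : ContinuousAt u 0 := hdiff2.continuousAt
  -- basic limits within the punctured neighborhood
  have hMSlim : Tendsto MS (nhdsWithin (0:ℝ) {0}ᶜ) (nhds 1) := by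
    simpa [hMS0] using hMScont.tendsto.mono_left nhdsWithin_le_nhds
  have hulim : Tendsto u (nhdsWithin (0:ℝ) {0}ᶜ) (nhds (1/mu)) := by
    simpa [hMS0'] using hucont.tendsto.mono_left nhdsWithin_le_nhds
  have hplim : Tendsto (fun s => (MS s - 1)/s) (nhdsWithin (0:ℝ) {0}ᶜ) (nhds (1/mu)) := by
    have h := hasDerivAt_iff_tendsto_slope.mp hMSd0.hasDerivAt
    rw [← hu, hMS0'] at h
    refine h.congr (fun s => ?_)
    rw [slope_def_field, hMS0, sub_zero]
  have huslope : Tendsto (fun s => (u s - 1/mu)/s) (nhdsWithin (0:ℝ) {0}ᶜ) (nhds ES2) := by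
    have h := hasDerivAt_iff_tendsto_slope.mp hdiff2.hasDerivAt
    rw [hMS0''] at h
    refine h.congr (fun s => ?_)
    rw [slope_def_field, hMS0', sub_zero]
  -- L'Hopital for the second-order term
  have hhlim : Tendsto (fun s => (MS s - 1 - s/mu)/s^2) (nhdsWithin (0:ℝ) {0}ᶜ)
      (nhds (ES2/2)) := by
    apply HasDerivAt.lhopital_zero_nhdsNE (f' := fun s => u s - 1/mu) (g' := fun s => 2*s)
    · filter_upwards [hdiff.filter_mono nhdsWithin_le_nhds] with s hs
      exact (hs.hasDerivAt.sub_const 1).sub ((hasDerivAt_id s).div_const mu)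
    · filter_upwards with s
      simpa using hasDerivAt_pow 2 s
    · filter_upwards [self_mem_nhdsWithin] with s hs
      have : s ≠ 0 := hs
      simpa using this
    · have h1 : Tendsto (fun s : ℝ => MS s - 1 - s/mu) (nhdsWithin (0:ℝ) {0}ᶜ)
          (nhds (1 - 1 - 0/mu)) := by
        exact ((hMSlim.sub tendsto_const_nhds).sub
          ((tendsto_id.div_const mu).mono_left nhdsWithin_le_nhds))
      simpa using h1
    · have h2 : Tendsto (fun s : ℝ => s^2) (nhdsWithin (0:ℝ) {0}ᶜ) (nhds (0^2)) :=
        (tendsto_id.pow 2).mono_left nhdsWithin_le_nhds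
      simpa using h2
    · have h3 := huslope.div_const 2
      have h3' : Tendsto (fun s => (u s - 1/mu)/(2*s)) (nhdsWithin (0:ℝ) {0}ᶜ)
          (nhds (ES2/2)) := by
        refine h3.congr (fun s => ?_)
        rw [div_div, mul_comm]
      exact h3'
  have hqlim : Tendsto (fun s => (s * u s - (MS s - 1))/s^2) (nhdsWithin (0:ℝ) {0}ᶜ)
      (nhds (ES2/2)) := by
    have h1 := huslope.sub hhlim
    have hval : ES2 - ES2/2 = ES2/2 := by ring
    rw [hval] at h1
    refine h1.congr' ?_
    filter_upwards [self_mem_nhdsWithin] with s hs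
    have hs' : (s:ℝ) ≠ 0 := hs
    field_simp
    ring
  -- the denominator factor
  have hClim0 : Tendsto (fun s => lam - s - l2 * MS s) (nhds (0:ℝ)) (nhds l1) := by
    have h : Tendsto (fun s => lam - s - l2 * MS s) (nhds (0:ℝ))
        (nhds (lam - 0 - l2 * 1)) := by
      exact (tendsto_const_nhds.sub tendsto_id).sub
        ((hMScont.tendsto.const_mul l2).congr (fun s => rfl)) |>.congr (fun s => rfl)
        |>.trans_eq (by rw [hMS0])
    have hval : lam - 0 - l2 * 1 = l1 := by rw [hlamdef]; ring
    rwa [hval] at h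
  have hCne : ∀ᶠ s in nhds (0:ℝ), lam - s - l2 * MS s ≠ 0 :=
    hClim0.eventually_ne hl1'
  have hClimP : Tendsto (fun s => lam - s - l2 * MS s) (nhdsWithin (0:ℝ) {0}ᶜ) (nhds l1) :=
    hClim0.mono_left nhdsWithin_le_nhds
  -- the explicit formula for the derivative on the punctured neighborhood
  have key : ∀ᶠ s in nhdsWithin (0:ℝ) {0}ᶜ,
      deriv (fun s =>
        l1 * MS s * (s + lam * (MS s - 1)) /
          (s * a * (lam - s - l2 * MS s))) s
      = a * l1 * ((lam - s - l2 * MS s) *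
            (u s + lam * ((MS s - 1)/s) * (s * ((s * u s - (MS s - 1))/s^2))
              + lam * ((s * u s - (MS s - 1))/s^2) + lam * u s * ((MS s - 1)/s))
          + MS s * (1 + lam * ((MS s - 1)/s)) * (1 + l2 * u s))
        / (a * (lam - s - l2 * MS s))^2 := by
    filter_upwards [hdiff.filter_mono nhdsWithin_le_nhds, hCne.filter_mono nhdsWithin_le_nhds,
      self_mem_nhdsWithin] with s hdMS hC hs
    have hs' : (s:ℝ) ≠ 0 := hs
    have hm : HasDerivAt MS (u s) s := hdMS.hasDerivAt
    have hN : HasDerivAt (fun x => l1 * MS x * (x + lam * (MS x - 1)))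
        (l1 * u s * (s + lam * (MS s - 1)) + l1 * MS s * (1 + lam * u s)) s :=
      (hm.const_mul l1).mul ((hasDerivAt_id s).add ((hm.sub_const 1).const_mul lam))
    have hD : HasDerivAt (fun x => x * a * (lam - x - l2 * MS x))
        (1 * a * (lam - s - l2 * MS s) + s * a * (0 - 1 - l2 * u s)) s :=
      ((hasDerivAt_id s).mul_const a).mul
        (((hasDerivAt_const s lam).sub (hasDerivAt_id s)).sub (hm.const_mul l2))
    have hDne : s * a * (lam - s - l2 * MS s) ≠ 0 := by
      exact mul_ne_zero (mul_ne_zero hs' ha') hC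
    rw [show (fun s => l1 * MS s * (s + lam * (MS s - 1)) / (s * a * (lam - s - l2 * MS s))) = (fun x => l1 * MS x * (x + lam * (MS x - 1))) / (fun x => x * a * (lam - x - l2 * MS x)) from rfl, (hN.div hD hDne).deriv]
    field_simp
    ring
  -- the limit of the explicit formula
  have hX : Tendsto (fun s => u s + lam * ((MS s - 1)/s) * (s * ((s * u s - (MS s - 1))/s^2))
        + lam * ((s * u s - (MS s - 1))/s^2) + lam * u s * ((MS s - 1)/s))
      (nhdsWithin (0:ℝ) {0}ᶜ)
      (nhds (1/mu + lam * (1/mu) * (0 * (ES2/2)) + lam * (ES2/2) + lam * (1/mu) * (1/mu))) := by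
    refine ((hulim.add ((tendsto_const_nhds.mul hplim).mul
      (((tendsto_id.mono_left nhdsWithin_le_nhds)).mul hqlim))).add
      (tendsto_const_nhds.mul hqlim)).add ((tendsto_const_nhds.mul hulim).mul hplim)
  have hY : Tendsto (fun s => MS s * (1 + lam * ((MS s - 1)/s)) * (1 + l2 * u s))
      (nhdsWithin (0:ℝ) {0}ᶜ)
      (nhds (1 * (1 + lam * (1/mu)) * (1 + l2 * (1/mu)))) :=
    (hMSlim.mul (tendsto_const_nhds.add (tendsto_const_nhds.mul hplim))).mul
      (tendsto_const_nhds.add (tendsto_const_nhds.mul hulim))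
  have hG : Tendsto (fun s =>
      a * l1 * ((lam - s - l2 * MS s) *
            (u s + lam * ((MS s - 1)/s) * (s * ((s * u s - (MS s - 1))/s^2))
              + lam * ((s * u s - (MS s - 1))/s^2) + lam * u s * ((MS s - 1)/s))
          + MS s * (1 + lam * ((MS s - 1)/s)) * (1 + l2 * u s))
        / (a * (lam - s - l2 * MS s))^2)
      (nhdsWithin (0:ℝ) {0}ᶜ)
      (nhds ((a * l1 * (l1 * (1/mu + lam * (1/mu) * (0 * (ES2/2)) + lam * (ES2/2)
          + lam * (1/mu) * (1/mu)) + 1 * (1 + lam * (1/mu)) * (1 + l2 * (1/mu))))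
        / (a * l1)^2)) := by
    refine Tendsto.div (tendsto_const_nhds.mul ((hClimP.mul hX).add hY))
      ((tendsto_const_nhds.mul hClimP).pow 2) (by positivity)
  have hval : (a * l1 * (l1 * (1/mu + lam * (1/mu) * (0 * (ES2/2)) + lam * (ES2/2)
          + lam * (1/mu) * (1/mu)) + 1 * (1 + lam * (1/mu)) * (1 + l2 * (1/mu))))
        / (a * l1)^2
      = (lam + mu) / (l1 * mu) + lam * mu * ES2 / (2 * (lam + mu)) := by
    have hlm : lam + mu ≠ 0 := by positivity
    rw [hadef]
    field_simp
    ring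
  rw [hval] at hG
  exact Tendsto.congr' (Filter.EventuallyEq.symm key) hG
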